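/- Let x1, x0 be Bessel sequences in X and u0 a Bessel sequence in U with synthesis operators Ξ1, Ξ0, Υ0, and suppose the data-generation assumption holds. Fix γ ∈ (0,1). Then the following are equivalent. (i) The data (x1,x0,u0) are informative for stabilization with decay rate γ, and there exists a stabilizing gain K ∈ L(X,U) with decay rate γ such that for every w ∈ ℓ²(ℕ) there exists v ∈ ℓ²(ℕ) with Ξ0 v = Ξ0 w and Υ0 v = K Ξ0 w. (ii) The range of Ξ0 is dense in X, and there exists a linear map Ξ0† : Ran Ξ0 → ℓ²(ℕ) such that (a) Ξ0(Ξ0† x) = x for all x ∈ Ran Ξ0, (b) there exists K' ∈ L(X,U) with K' x = Υ0(Ξ0† x) for all x ∈ Ran Ξ0, and (c) there exists F ∈ L(X) with F x = Ξ1(Ξ0† x) for all x ∈ Ran Ξ0 and F is power stable with decay rate γ. -/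

import Mathlib

noncomputable section

/-- `ℓ²(ℕ)`: the Hilbert space of square-summable complex sequences. -/
abbrev l2 : Type := lp (fun _ : ℕ => ℂ) 2

/-- `η` is a Bessel sequence in `Y`. -/
def Bessel {Y : Type} [NormedAddCommGroup Y] [InnerProductSpace ℂ Y] (η : ℕ → Y) : Prop :=
  ∃ α : ℝ, 0 < α ∧ ∀ y : Y, ∑' k : ℕ, ‖(inner ℂ y (η k) : ℂ)‖ ^ 2 ≤ α * ‖y‖ ^ 2

/-- `T` is the synthesis operator associated with `η`: `T w = ∑ₖ wₖ • ηₖ`. -/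
def IsSynthesis {Y : Type} [NormedAddCommGroup Y] [InnerProductSpace ℂ Y] (η : ℕ → Y)
    (T : l2 →L[ℂ] Y) : Prop :=
  ∀ w : l2, HasSum (fun k : ℕ => w k • η k) (T w)


lemma synth_mem_range {Y : Type} [NormedAddCommGroup Y] [InnerProductSpace ℂ Y]
    (η : ℕ → Y) (T : l2 →L[ℂ] Y) (hT : IsSynthesis η T) (k : ℕ) :
    η k ∈ LinearMap.range (T : l2 →ₗ[ℂ] Y) := by
  refine ⟨lp.single 2 k (1 : ℂ), ?_⟩
  have h := hT (lp.single 2 k (1 : ℂ))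
  have heq : (fun j : ℕ => (lp.single 2 k (1 : ℂ) : l2) j • η j)
      = fun j => if j = k then η k else 0 := by
    funext j
    by_cases hj : j = k
    · subst hj; simp [lp.single_apply_self]
    · simp [lp.single_apply_ne 2 k _ hj, hj]
  rw [heq] at h
  exact h.unique (hasSum_ite_eq k (η k))

lemma synth_combine {X U : Type}
    [NormedAddCommGroup X] [InnerProductSpace ℂ X]
    [NormedAddCommGroup U] [InnerProductSpace ℂ U]
    {x1 x0 : ℕ → X} {u0 : ℕ → U}
    {Ξ1 Ξ0 : l2 →L[ℂ] X} {Υ0 : l2 →L[ℂ] U}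
    (hΞ1 : IsSynthesis x1 Ξ1) (hΞ0 : IsSynthesis x0 Ξ0) (hΥ0 : IsSynthesis u0 Υ0)
    (A : X →L[ℂ] X) (B : U →L[ℂ] X)
    (h : ∀ k : ℕ, x1 k = A (x0 k) + B (u0 k)) (v : l2) :
    Ξ1 v = A (Ξ0 v) + B (Υ0 v) := by
  have hA : HasSum (fun k : ℕ => v k • A (x0 k)) (A (Ξ0 v)) := by
    simpa [map_smul] using (hΞ0 v).mapL A
  have hB : HasSum (fun k : ℕ => v k • B (u0 k)) (B (Υ0 v)) := by
    simpa [map_smul] using (hΥ0 v).mapL B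
  have hsum : HasSum (fun k : ℕ => v k • x1 k) (A (Ξ0 v) + B (Υ0 v)) := by
    have := hA.add hB
    simpa [h, smul_add] using this
  exact (hΞ1 v).unique hsum

lemma exists_linear_section {V W : Type*} [AddCommGroup V] [Module ℂ V]
    [AddCommGroup W] [Module ℂ W] (P : V →ₗ[ℂ] W) :
    ∃ s : ↥(LinearMap.range P) →ₗ[ℂ] V, ∀ y : ↥(LinearMap.range P), P (s y) = (y : W) := by
  obtain ⟨g, hg⟩ := P.rangeRestrict.exists_rightInverse_of_surjective
    (LinearMap.range_eq_top.2 (LinearMap.surjective_rangeRestrict P))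
  exact ⟨g, fun y => congrArg Subtype.val (LinearMap.ext_iff.1 hg y)⟩

theorem stmt_3
    {X : Type} [NormedAddCommGroup X] [InnerProductSpace ℂ X] [CompleteSpace X] [Nontrivial X]
    {U : Type} [NormedAddCommGroup U] [InnerProductSpace ℂ U] [CompleteSpace U] [Nontrivial U]
    (x1 x0 : ℕ → X) (u0 : ℕ → U)
    (hx1B : Bessel x1) (hx0B : Bessel x0) (hu0B : Bessel u0)
    (Ξ1 Ξ0 : l2 →L[ℂ] X) (Υ0 : l2 →L[ℂ] U)
    (hΞ1 : IsSynthesis x1 Ξ1) (hΞ0 : IsSynthesis x0 Ξ0) (hΥ0 : IsSynthesis u0 Υ0)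
    (As : X →L[ℂ] X) (Bs : U →L[ℂ] X)
    (hgen : ∀ k : ℕ, x1 k = As (x0 k) + Bs (u0 k))
    (γ : ℝ) (hγ0 : 0 < γ) (hγ1 : γ < 1) :
    -- (i)
    ((∃ (K : X →L[ℂ] U) (M : ℝ), 1 ≤ M ∧ ∀ (A : X →L[ℂ] X) (B : U →L[ℂ] X),
          (∀ k : ℕ, x1 k = A (x0 k) + B (u0 k)) →
          ∀ k : ℕ, ‖(A + B.comp K) ^ k‖ ≤ M * γ ^ k) ∧
      (∃ K : X →L[ℂ] U,
        (∃ M : ℝ, 1 ≤ M ∧ ∀ (A : X →L[ℂ] X) (B : U →L[ℂ] X),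
            (∀ k : ℕ, x1 k = A (x0 k) + B (u0 k)) →
            ∀ k : ℕ, ‖(A + B.comp K) ^ k‖ ≤ M * γ ^ k) ∧
        ∀ w : l2, ∃ v : l2, Ξ0 v = Ξ0 w ∧ Υ0 v = K (Ξ0 w)))
    ↔
    -- (ii)
    (DenseRange ⇑Ξ0 ∧
      ∃ Ξd : ↥(LinearMap.range (Ξ0 : l2 →ₗ[ℂ] X)) →ₗ[ℂ] l2,
        (∀ x : ↥(LinearMap.range (Ξ0 : l2 →ₗ[ℂ] X)), Ξ0 (Ξd x) = (x : X)) ∧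
        (∃ K' : X →L[ℂ] U, ∀ x : ↥(LinearMap.range (Ξ0 : l2 →ₗ[ℂ] X)), K' (x : X) = Υ0 (Ξd x)) ∧
        (∃ F : X →L[ℂ] X, (∀ x : ↥(LinearMap.range (Ξ0 : l2 →ₗ[ℂ] X)), F (x : X) = Ξ1 (Ξd x)) ∧
          ∃ M : ℝ, 1 ≤ M ∧ ∀ k : ℕ, ‖F ^ k‖ ≤ M * γ ^ k)) := by
  constructor
  · rintro ⟨-, K, ⟨M, hM1, hbd⟩, hcov⟩
    constructor
    · -- dense range
      by_contra hnd
      have hset : (LinearMap.range (Ξ0 : l2 →ₗ[ℂ] X) : Set X) = Set.range ⇑Ξ0 := by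
        simp [LinearMap.coe_range]
      have hne : (LinearMap.range (Ξ0 : l2 →ₗ[ℂ] X)).topologicalClosure ≠ ⊤ := by
        intro htop
        exact hnd (by rw [DenseRange, ← hset]
                      exact Submodule.dense_iff_topologicalClosure_eq_top.2 htop)
      have horthne : (LinearMap.range (Ξ0 : l2 →ₗ[ℂ] X))ᗮ ≠ ⊥ := by
        intro h
        exact hne (Submodule.topologicalClosure_eq_top_iff.2 h)
      obtain ⟨z, hzmem, hz0⟩ := (Submodule.ne_bot_iff _).1 horthne
      have hz : (0:ℝ) < ‖z‖ := norm_pos_iff.2 hz0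
      have horth : ∀ k : ℕ, (inner ℂ z (x0 k) : ℂ) = 0 := fun k =>
        (Submodule.mem_orthogonal' _ z).1 hzmem _ (synth_mem_range x0 Ξ0 hΞ0 k)
      set G : X →L[ℂ] X := As + Bs.comp K with hG
      set c : ℝ := (M * γ + ‖G‖ + 1) / ‖z‖ ^ 2 with hc
      have hcpos : 0 < c := by
        apply div_pos
        · have : (0:ℝ) ≤ ‖G‖ := norm_nonneg _
          nlinarith
        · positivity
      set Δ : X →L[ℂ] X := (innerSL ℂ z).smulRight z with hΔ
      have hΔx0 : ∀ k : ℕ, Δ (x0 k) = 0 := by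
        intro k
        simp [hΔ, horth k]
      set A' : X →L[ℂ] X := As + (c : ℂ) • Δ with hA'
      have hcons : ∀ k : ℕ, x1 k = A' (x0 k) + Bs (u0 k) := by
        intro k
        rw [hgen k]
        simp [hA', hΔx0 k]
      have hb := hbd A' Bs hcons 1
      rw [pow_one, pow_one] at hb
      have hop : A' + Bs.comp K = G + (c : ℂ) • Δ := by
        rw [hA', hG]; abel
      have hΔz : Δ z = (inner ℂ z z : ℂ) • z := by simp [hΔ]
      have hinner : ‖(inner ℂ z z : ℂ)‖ = ‖z‖ ^ 2 := by
        rw [@inner_self_eq_norm_sq_to_K ℂ]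
        simp [sq_abs]
      have hval : ((A' + Bs.comp K) z) = G z + ((c:ℂ) • ((inner ℂ z z : ℂ) • z)) := by
        rw [hop]; simp [hΔz]
      have hub : ‖(A' + Bs.comp K) z‖ ≤ M * γ * ‖z‖ :=
        le_trans ((A' + Bs.comp K).le_opNorm z)
          (mul_le_mul_of_nonneg_right hb (norm_nonneg z))
      have hsnorm : ‖(c:ℂ) • ((inner ℂ z z : ℂ) • z)‖ = c * (‖z‖ ^ 2 * ‖z‖) := by
        rw [norm_smul, norm_smul, hinner]
        simp [abs_of_pos hcpos]
      have hlb : c * (‖z‖ ^ 2 * ‖z‖) ≤ ‖(A' + Bs.comp K) z‖ + ‖G z‖ := by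
        rw [← hsnorm]
        calc ‖(c:ℂ) • ((inner ℂ z z : ℂ) • z)‖
            = ‖(G z + (c:ℂ) • ((inner ℂ z z : ℂ) • z)) - G z‖ := by rw [add_sub_cancel_left]
          _ ≤ ‖G z + (c:ℂ) • ((inner ℂ z z : ℂ) • z)‖ + ‖G z‖ := norm_sub_le _ _
          _ = ‖(A' + Bs.comp K) z‖ + ‖G z‖ := by rw [hval]
      have hGz : ‖G z‖ ≤ ‖G‖ * ‖z‖ := G.le_opNorm z
      have hcz : c * ‖z‖ ^ 2 = M * γ + ‖G‖ + 1 := by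
        rw [hc]; field_simp
      nlinarith [hub, hlb, hGz, hcz, hz]
    · -- construct Ξd
      obtain ⟨s, hs⟩ := exists_linear_section
        (LinearMap.prod (Ξ0 : l2 →ₗ[ℂ] X) (Υ0 : l2 →ₗ[ℂ] U))
      have hmem : ∀ x : ↥(LinearMap.range (Ξ0 : l2 →ₗ[ℂ] X)),
          (((LinearMap.range (Ξ0 : l2 →ₗ[ℂ] X)).subtype.prod
            (K.toLinearMap.comp (LinearMap.range (Ξ0 : l2 →ₗ[ℂ] X)).subtype)) x) ∈
          LinearMap.range (LinearMap.prod (Ξ0 : l2 →ₗ[ℂ] X) (Υ0 : l2 →ₗ[ℂ] U)) := by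
        rintro ⟨x, w, hw⟩
        obtain ⟨v, hv1, hv2⟩ := hcov w
        refine ⟨v, Prod.ext ?_ ?_⟩
        · exact hv1.trans hw
        · rw [show Ξ0 w = x from hw] at hv2; exact hv2
      have key : ∀ x : ↥(LinearMap.range (Ξ0 : l2 →ₗ[ℂ] X)),
          Ξ0 ((s.comp (LinearMap.codRestrict _ _ hmem)) x) = (x : X) ∧
          Υ0 ((s.comp (LinearMap.codRestrict _ _ hmem)) x) = K (x : X) := by
        intro x
        have h1 : (LinearMap.prod (Ξ0 : l2 →ₗ[ℂ] X) (Υ0 : l2 →ₗ[ℂ] U))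
            ((s.comp (LinearMap.codRestrict _ _ hmem)) x) = ((x : X), K (x : X)) :=
          hs ((LinearMap.codRestrict _ _ hmem) x)
        exact ⟨congrArg Prod.fst h1, congrArg Prod.snd h1⟩
      refine ⟨s.comp (LinearMap.codRestrict _ _ hmem),
        fun x => (key x).1, ⟨K, fun x => ((key x).2).symm⟩, ?_⟩
      refine ⟨As + Bs.comp K, ?_, M, hM1, hbd As Bs hgen⟩
      intro x
      rw [synth_combine hΞ1 hΞ0 hΥ0 As Bs hgen _, (key x).1, (key x).2]
      simp
  · rintro ⟨hdense, Ξd, ha, ⟨K', hK'⟩, F, hF, M, hM1, hFbd⟩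
    have hclaim : ∀ (A : X →L[ℂ] X) (B : U →L[ℂ] X),
        (∀ k : ℕ, x1 k = A (x0 k) + B (u0 k)) → A + B.comp K' = F := by
      intro A B hcons
      have hfun : ⇑(A + B.comp K') = ⇑F := by
        apply Continuous.ext_on hdense (A + B.comp K').continuous F.continuous
        rintro x ⟨w, rfl⟩
        set xx : ↥(LinearMap.range (Ξ0 : l2 →ₗ[ℂ] X)) := ⟨Ξ0 w, ⟨w, rfl⟩⟩ with hxx
        have h1 : Ξ0 (Ξd xx) = Ξ0 w := ha xx
        have h2 : K' (Ξ0 w) = Υ0 (Ξd xx) := hK' xx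
        have h3 : F (Ξ0 w) = Ξ1 (Ξd xx) := hF xx
        have h4 := synth_combine hΞ1 hΞ0 hΥ0 A B hcons (Ξd xx)
        simp only [ContinuousLinearMap.add_apply, ContinuousLinearMap.comp_apply]
        rw [h2, h3, h4, h1]
      exact ContinuousLinearMap.ext (congrFun hfun)
    have hbd' : ∀ (A : X →L[ℂ] X) (B : U →L[ℂ] X),
        (∀ k : ℕ, x1 k = A (x0 k) + B (u0 k)) →
        ∀ k : ℕ, ‖(A + B.comp K') ^ k‖ ≤ M * γ ^ k := by
      intro A B hcons k
      rw [hclaim A B hcons]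
      exact hFbd k
    refine ⟨⟨K', M, hM1, hbd'⟩, K', ⟨M, hM1, hbd'⟩, ?_⟩
    intro w
    refine ⟨Ξd ⟨Ξ0 w, ⟨w, rfl⟩⟩, ha _, (hK' _).symm⟩
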